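/- (Unlimited Sampling Theorem, identifiability form) Let Ω > 0, λ > 0, and let f, g : ℝ → ℝ be Ω-bandlimited. If the sampling interval T > 0 satisfies T ≤ 1/(2Ωe) and the modulo samples agree, i.e. 𝓜_λ(f(kT)) = 𝓜_λ(g(kT)) for all k ∈ ℤ, then f and g agree up to an additive constant in 2λℤ: there exists v ∈ ℤ such that f(t) = g(t) + 2λv for all t ∈ ℝ. -/

import Mathlib

open MeasureTheory

/-- `f : ℝ → ℝ` is `Ω`-bandlimited (`Ω` in rad/s): continuous, integrable and bounded,
with Fourier transform `𝓕f(ξ) = ∫ f(t) e^{−2πiξt} dt` vanishing for `|ξ| > Ω/(2π)`. -/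
def IsBandlimited (Ω : ℝ) (f : ℝ → ℝ) : Prop :=
  Continuous f ∧ Integrable f ∧ (∃ C : ℝ, ∀ t : ℝ, |f t| ≤ C) ∧
    ∀ ξ : ℝ, Ω / (2 * Real.pi) < |ξ| →
      FourierTransform.fourier (fun t : ℝ => (f t : ℂ)) ξ = 0

/-- The centered modulo map `𝓜_λ(r) = 2λ(⟦r/(2λ) + 1/2⟧ − 1/2)`. -/
noncomputable def centeredModulo (lam r : ℝ) : ℝ :=
  2 * lam * (Int.fract (r / (2 * lam) + 1 / 2) - 1 / 2)

open Real Complex Filter Topology FourierTransform intervalIntegral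

/-- If centered modulos agree, values differ by an element of `2λℤ`. -/
lemma centeredModulo_eq_imp {lam x y : ℝ} (hlam : 0 < lam)
    (h : centeredModulo lam x = centeredModulo lam y) : ∃ m : ℤ, x = y + 2 * lam * m := by
  have h2 : (0:ℝ) < 2 * lam := by linarith
  have hfr : Int.fract (x / (2 * lam) + 1 / 2) = Int.fract (y / (2 * lam) + 1 / 2) := by
    have := mul_left_cancel₀ (ne_of_gt h2) h
    linarith
  obtain ⟨z, hz⟩ := Int.fract_eq_fract.mp hfr
  refine ⟨z, ?_⟩
  have : x / (2 * lam) - y / (2 * lam) = z := by linarith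
  field_simp at this
  linarith

/-- forward difference operator on `ℤ`-indexed real sequences -/
def Dop : (ℤ → ℝ) → (ℤ → ℝ) := fun u k => u (k + 1) - u k

lemma Dop_iter_succ' (N : ℕ) (u : ℤ → ℝ) (k : ℤ) :
    Dop^[N + 1] u k = Dop^[N] u (k + 1) - Dop^[N] u k := by
  rw [Function.iterate_succ_apply']; rfl

/-- A bounded sequence whose `N`-th forward difference vanishes is constant. -/
lemma const_of_iter_diff_zero : ∀ (N : ℕ) (u : ℤ → ℝ) (C : ℝ), (∀ k, |u k| ≤ C) →
    (∀ k, Dop^[N] u k = 0) → ∀ k, u k = u 0 := by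
  intro N
  induction N with
  | zero =>
    intro u C _ h0 k
    simpa using (h0 k).trans (h0 0).symm
  | succ N ih =>
    intro u C hb h0 k
    have hw : ∀ k, Dop^[N] (Dop u) k = 0 := fun k => by
      rw [← Function.iterate_succ_apply]; exact h0 k
    have hwb : ∀ k, |Dop u k| ≤ C + C := fun k => by
      have := abs_sub (u (k + 1)) (u k)
      calc |Dop u k| ≤ |u (k+1)| + |u k| := abs_sub _ _
        _ ≤ C + C := add_le_add (hb _) (hb _)
    have hconst := ih (Dop u) (C + C) hwb hw
    set c := Dop u 0 with hc
    -- u k = u 0 + k * c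
    have key : ∀ k : ℤ, u k = u 0 + k * c := by
      intro k
      induction k using Int.induction_on with
      | zero => simp
      | succ n hn =>
        have := hconst n
        have hd : u (n + 1) - u n = c := this
        push_cast
        push_cast at hn
        linarith
      | pred n hn =>
        have := hconst (-n - 1)
        have hd : u (-n - 1 + 1) - u (-n - 1) = c := this
        have h1 : (-(n:ℤ) - 1 + 1) = -n := by ring
        rw [h1] at hd
        push_cast
        push_cast at hn
        linarith
    -- boundedness forces c = 0
    have hc0 : c = 0 := by
      by_contra hne
      obtain ⟨n, hn⟩ := exists_nat_gt ((2 * C + |u 0| + |u 0| + 1) / |c|)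
      have hcpos : 0 < |c| := abs_pos.mpr hne
      have h1 : |u (n:ℤ)| ≤ C := hb _
      have h2 : u (n:ℤ) = u 0 + n * c := by
        have := key (n:ℤ); push_cast at this ⊢; linarith
      have h3 : (n:ℝ) * |c| ≤ |u 0| + C := by
        have heq : |(n:ℝ) * c| = |u (n:ℤ) - u 0| := by rw [h2]; ring_nf
        rw [abs_mul, _root_.abs_of_nonneg (n.cast_nonneg : (0:ℝ) ≤ (n:ℝ))] at heq
        have h4 : |u (n:ℤ) - u 0| ≤ |u (n:ℤ)| + |u 0| := abs_sub _ _
        calc (n:ℝ) * |c| = |u (n:ℤ) - u 0| := heq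
          _ ≤ |u (n:ℤ)| + |u 0| := h4
          _ ≤ C + |u 0| := by linarith
          _ = |u 0| + C := by ring
      have h5 : (2 * C + |u 0| + |u 0| + 1) / |c| < n := hn
      have h6 : 2 * C + |u 0| + |u 0| + 1 < n * |c| := by
        rw [div_lt_iff₀ hcpos] at h5; linarith
      have hC0 : 0 ≤ C := (abs_nonneg _).trans (hb 0)
      have hu0 : 0 ≤ |u 0| := abs_nonneg _
      linarith
    rw [key k, hc0]; ring

set_option maxHeartbeats 1000000 in
/-- Unlimited Sampling Theorem, identifiability form. -/
theorem unlimited_sampling_identifiability (Ω lam : ℝ) (hΩ : 0 < Ω) (hlam : 0 < lam)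
    (f g : ℝ → ℝ) (hf : IsBandlimited Ω f) (hg : IsBandlimited Ω g)
    (T : ℝ) (hT : 0 < T) (hTle : T ≤ 1 / (2 * Ω * Real.exp 1))
    (hsamples : ∀ k : ℤ, centeredModulo lam (f (k * T)) = centeredModulo lam (g (k * T))) :
    ∃ v : ℤ, ∀ t : ℝ, f t = g t + 2 * lam * v := by
  obtain ⟨hfc, hfi, -, hfB⟩ := hf
  obtain ⟨hgc, hgi, -, hgB⟩ := hg
  have hπ := Real.pi_pos
  have he1 : (1:ℝ) < Real.exp 1 := by
    have := Real.add_one_lt_exp (x := 1) one_ne_zero; linarith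
  set a : ℝ := Ω / (2 * Real.pi) with ha
  have ha0 : 0 < a := by positivity
  -- the difference function and its Fourier transform
  set h : ℝ → ℂ := fun t => (f t : ℂ) - (g t : ℂ) with hh
  have hhc : Continuous h :=
    (Complex.continuous_ofReal.comp hfc).sub (Complex.continuous_ofReal.comp hgc)
  have hhi : Integrable h := hfi.ofReal.sub hgi.ofReal
  set H : ℝ → ℂ := 𝓕 h with hH
  have hH0 : ∀ ξ : ℝ, a < |ξ| → H ξ = 0 := by
    intro ξ hξ
    have h1 : H ξ = 𝓕 (fun t : ℝ => (f t : ℂ)) ξ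
        - 𝓕 (fun t : ℝ => (g t : ℂ)) ξ := by
      rw [hH]
      simp only [Real.fourier_eq, hh, smul_sub]
      exact integral_sub ((Real.fourierIntegral_convergent_iff ξ).2 hfi.ofReal)
        ((Real.fourierIntegral_convergent_iff ξ).2 hgi.ofReal)
    rw [h1, hfB ξ hξ, hgB ξ hξ, sub_zero]
  have hHcont : Continuous H :=
    VectorFourier.fourierIntegral_continuous (L := innerₗ ℝ) Real.continuous_fourierChar
      (by exact continuous_inner) hhi
  have hHsupp : HasCompactSupport H :=
    HasCompactSupport.intro (isCompact_Icc (a := -a) (b := a)) (fun ξ hξ => by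
      apply hH0
      simp only [Set.mem_Icc, not_and_or, not_le] at hξ
      rcases hξ with h1 | h1
      · rw [abs_of_neg (by linarith)]; linarith
      · rw [abs_of_pos (by linarith)]; linarith)
  have hHint : Integrable H := hHcont.integrable_of_hasCompactSupport hHsupp
  have hinv : ∀ t : ℝ, (𝓕⁻ H) t = h t := by
    intro t
    rw [hH]
    rw [hhc.fourierInv_fourier_eq hhi hHint]
  -- the sample differences
  set ε : ℤ → ℝ := fun k => f (k * T) - g (k * T) with hε
  have hsampZ : ∀ k : ℤ, ∃ m : ℤ, ε k = 2 * lam * m := by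
    intro k
    obtain ⟨m, hm⟩ := centeredModulo_eq_imp hlam (hsamples k)
    refine ⟨m, ?_⟩
    show f (k * T) - g (k * T) = 2 * lam * m
    rw [hm]; ring
  -- the phase function
  set c : ℝ → ℂ := fun ξ => Complex.exp (2 * Real.pi * ξ * T * Complex.I) with hcdef
  have hcne : ∀ ξ, c ξ ≠ 0 := fun ξ => Complex.exp_ne_zero _
  have hcabs : ∀ ξ, ‖c ξ‖ = 1 := by
    intro ξ
    show ‖Complex.exp (2 * Real.pi * ξ * T * Complex.I)‖ = 1
    rw [show ((2:ℂ) * Real.pi * ξ * T * Complex.I)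
        = ((2 * Real.pi * ξ * T : ℝ) : ℂ) * Complex.I by push_cast; ring]
    exact Complex.norm_exp_ofReal_mul_I _
  have hccont : Continuous c := by
    rw [hcdef]
    exact Complex.continuous_exp.comp (by continuity)
  set Φ : ℕ → ℤ → ℂ := fun N k => ∫ ξ : ℝ, ((c ξ) ^ (k:ℤ) * (c ξ - 1) ^ N) * H ξ with hΦ
  -- numerical bounds
  have hΩT : Ω * T ≤ 1 / (2 * Real.exp 1) := by
    rw [le_div_iff₀ (by positivity)] at hTle ⊢
    nlinarith [Real.exp_pos 1]
  have hinvE : 1 / (2 * Real.exp 1) ≤ 1 := by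
    rw [div_le_one (by positivity)]; linarith
  set q : ℝ := 2 * (Ω * T) with hq
  have hq0 : 0 < q := by positivity
  have hqlt1 : q < 1 := by
    have : 1 / (2 * Real.exp 1) < 1 / 2 := by
      rw [div_lt_div_iff₀ (by positivity) (by positivity)]; linarith
    rw [hq]; linarith
  have h2pa : 2 * Real.pi * a = Ω := by rw [ha]; field_simp
  -- key pointwise estimate on the band
  have hcsub : ∀ ξ : ℝ, |ξ| ≤ a → ‖c ξ - 1‖ ≤ q := by
    intro ξ hξ
    have hx : ‖(2:ℂ) * Real.pi * ξ * T * Complex.I‖ = 2 * Real.pi * |ξ| * T := by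
      rw [show ((2:ℂ) * Real.pi * ξ * T * Complex.I)
          = ((2 * Real.pi * ξ * T : ℝ) : ℂ) * Complex.I by push_cast; ring]
      rw [norm_mul, Complex.norm_I, mul_one, Complex.norm_real, Real.norm_eq_abs]
      rw [abs_mul, abs_mul, abs_mul, _root_.abs_two, _root_.abs_of_pos hπ, _root_.abs_of_pos hT]
    have hstep : 2 * Real.pi * |ξ| * T ≤ Ω * T := by
      have h1 : 2 * Real.pi * |ξ| ≤ 2 * Real.pi * a :=
        mul_le_mul_of_nonneg_left hξ (by positivity)
      rw [h2pa] at h1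
      exact mul_le_mul_of_nonneg_right h1 hT.le
    have hle1 : 2 * Real.pi * |ξ| * T ≤ 1 := by
      calc 2 * Real.pi * |ξ| * T ≤ Ω * T := hstep
        _ ≤ 1 / (2 * Real.exp 1) := hΩT
        _ ≤ 1 := hinvE
    have hb := Complex.norm_exp_sub_one_le (x := (2:ℂ) * Real.pi * ξ * T * Complex.I)
      (by rw [hx]; exact hle1)
    have hceq : c ξ = Complex.exp ((2:ℂ) * Real.pi * ξ * T * Complex.I) := rfl
    rw [hceq]
    calc ‖Complex.exp ((2:ℂ) * Real.pi * ξ * T * Complex.I) - 1‖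
        ≤ 2 * ‖(2:ℂ) * Real.pi * ξ * T * Complex.I‖ := hb
      _ = 2 * (2 * Real.pi * |ξ| * T) := by rw [hx]
      _ ≤ 2 * (Ω * T) := by linarith
      _ = q := hq.symm
  -- integrability of the integrands
  have hphibd : ∀ (N : ℕ) (k : ℤ) (ξ : ℝ), ‖(c ξ) ^ (k:ℤ) * (c ξ - 1) ^ N‖ ≤ 2 ^ N := by
    intro N k ξ
    rw [norm_mul, norm_zpow, hcabs, one_zpow, one_mul, norm_pow]
    refine pow_le_pow_left₀ (norm_nonneg _) ?_ N
    calc ‖c ξ - 1‖ ≤ ‖c ξ‖ + ‖(1:ℂ)‖ := norm_sub_le _ _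
      _ = 2 := by rw [hcabs, norm_one]; norm_num
  have hphicont : ∀ (N : ℕ) (k : ℤ), Continuous fun ξ => (c ξ) ^ (k:ℤ) * (c ξ - 1) ^ N := by
    intro N k
    exact (hccont.zpow₀ k (fun ξ => Or.inl (hcne ξ))).mul ((hccont.sub continuous_const).pow N)
  have hint : ∀ (N : ℕ) (k : ℤ),
      Integrable (fun ξ : ℝ => ((c ξ) ^ (k:ℤ) * (c ξ - 1) ^ N) * H ξ) := by
    intro N k
    exact hHint.bdd_mul (c := 2 ^ N) (hphicont N k).aestronglyMeasurable (Filter.Eventually.of_forall (hphibd N k))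
  -- Φ 0 k is the k-th sample of h
  have hΦinv : ∀ k : ℤ, Φ 0 k = (𝓕⁻ H) ((k:ℝ) * T) := by
    intro k
    rw [hΦ, Real.fourierInv_eq']
    simp only [pow_zero, mul_one]
    refine integral_congr_ae (Filter.Eventually.of_forall fun ξ => ?_)
    show c ξ ^ (k:ℤ) * H ξ = Complex.exp (((2 * Real.pi * inner ℝ ξ ((k:ℝ) * T) : ℝ) : ℂ)
      * Complex.I) • H ξ
    rw [smul_eq_mul]
    congr 1
    have hceq : c ξ = Complex.exp ((2:ℂ) * Real.pi * ξ * T * Complex.I) := rfl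
    rw [hceq, ← Complex.exp_int_mul]
    congr 1
    simp only [RCLike.inner_apply, conj_trivial]
    push_cast
    ring
  have hΦ0 : ∀ k : ℤ, Φ 0 k = ((ε k : ℝ) : ℂ) := by
    intro k
    have h2 : (𝓕⁻ H) ((k:ℝ) * T) = h ((k:ℝ) * T) := hinv _
    rw [hΦinv k, h2, hh]
    show (f ((k:ℝ) * T) : ℂ) - (g ((k:ℝ) * T) : ℂ) = ((ε k : ℝ) : ℂ)
    rw [hε]
    push_cast
    ring
  -- the difference recurrence
  have hΦrec : ∀ (N : ℕ) (k : ℤ), Φ (N + 1) k = Φ N (k + 1) - Φ N k := by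
    intro N k
    rw [hΦ]
    simp only
    rw [← integral_sub (hint N (k + 1)) (hint N k)]
    refine integral_congr_ae (Filter.Eventually.of_forall fun ξ => ?_)
    have hz : (c ξ) ^ ((k + 1 : ℤ)) = (c ξ) ^ (k:ℤ) * c ξ := zpow_add_one₀ (hcne ξ) k
    show c ξ ^ (k:ℤ) * (c ξ - 1) ^ (N + 1) * H ξ
        = c ξ ^ ((k + 1 : ℤ)) * (c ξ - 1) ^ N * H ξ - c ξ ^ (k:ℤ) * (c ξ - 1) ^ N * H ξ
    rw [hz]
    ring
  -- norm bound for Φ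
  set M : ℝ := ∫ ξ : ℝ, ‖H ξ‖ with hM
  have hM0 : 0 ≤ M := integral_nonneg fun _ => norm_nonneg _
  have hpt : ∀ (N : ℕ) (k : ℤ) (ξ : ℝ),
      ‖((c ξ) ^ (k:ℤ) * (c ξ - 1) ^ N) * H ξ‖ ≤ q ^ N * ‖H ξ‖ := by
    intro N k ξ
    by_cases hz : H ξ = 0
    · simp [hz]
    · have hξa : |ξ| ≤ a := by
        by_contra hlt
        exact hz (hH0 ξ (lt_of_not_ge hlt))
      rw [norm_mul, norm_mul, norm_zpow, hcabs, one_zpow, one_mul,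
        norm_pow]
      have h1 : ‖c ξ - 1‖ ≤ q := by exact hcsub ξ hξa
      exact mul_le_mul_of_nonneg_right (pow_le_pow_left₀ (norm_nonneg _) h1 N) (norm_nonneg _)
  have hΦbd : ∀ (N : ℕ) (k : ℤ), ‖Φ N k‖ ≤ q ^ N * M := by
    intro N k
    rw [hΦ]
    calc ‖∫ ξ : ℝ, ((c ξ) ^ (k:ℤ) * (c ξ - 1) ^ N) * H ξ‖
        ≤ ∫ ξ : ℝ, ‖((c ξ) ^ (k:ℤ) * (c ξ - 1) ^ N) * H ξ‖ := norm_integral_le_integral_norm _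
      _ ≤ ∫ ξ : ℝ, q ^ N * ‖H ξ‖ :=
          integral_mono (hint N k).norm (hHint.norm.const_mul _) (hpt N k)
      _ = q ^ N * M := by rw [MeasureTheory.integral_const_mul, hM]
  -- link with iterated differences
  have hlink : ∀ (N : ℕ) (k : ℤ), ((Dop^[N] ε k : ℝ) : ℂ) = Φ N k := by
    intro N
    induction N with
    | zero => intro k; simpa using (hΦ0 k).symm
    | succ N ih =>
      intro k
      rw [Dop_iter_succ', hΦrec]
      push_cast
      rw [ih, ih]
  have hDbd : ∀ (N : ℕ) (k : ℤ), |Dop^[N] ε k| ≤ q ^ N * M := by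
    intro N k
    have := hΦbd N k
    rw [← hlink N k] at this
    rwa [Complex.norm_real, Real.norm_eq_abs] at this
  have hDmem : ∀ (N : ℕ) (k : ℤ), ∃ m : ℤ, Dop^[N] ε k = 2 * lam * m := by
    intro N
    induction N with
    | zero => exact hsampZ
    | succ N ih =>
      intro k
      obtain ⟨m1, hm1⟩ := ih (k + 1)
      obtain ⟨m2, hm2⟩ := ih k
      refine ⟨m1 - m2, ?_⟩
      rw [Dop_iter_succ', hm1, hm2]
      push_cast
      ring
  -- choose N large enough
  obtain ⟨N, hN⟩ := exists_pow_lt_of_lt_one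
    (show (0:ℝ) < 2 * lam / (M + 1) by positivity) hqlt1
  have hNlt : q ^ N * M < 2 * lam := by
    have hM1 : (0:ℝ) < M + 1 := by linarith
    have h1 : q ^ N * (M + 1) < 2 * lam := (lt_div_iff₀ hM1).mp hN
    nlinarith [pow_pos hq0 N]
  have hDN0 : ∀ k : ℤ, Dop^[N] ε k = 0 := by
    intro k
    obtain ⟨m, hm⟩ := hDmem N k
    have h1 : |Dop^[N] ε k| < 2 * lam := lt_of_le_of_lt (hDbd N k) hNlt
    rw [hm] at h1
    rw [abs_mul, _root_.abs_of_pos (show (0:ℝ) < 2 * lam by linarith)] at h1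
    have hmabs : |(m:ℝ)| < 1 := by nlinarith [abs_nonneg (m:ℝ)]
    have hm0 : m = 0 := by
      have h2 : |(m:ℝ)| < 1 := hmabs
      rw [abs_lt] at h2
      have h3 : (-1:ℝ) < (m:ℝ) := h2.1
      have h4 : (m:ℝ) < 1 := h2.2
      have h5 : -1 < m := by exact_mod_cast h3
      have h6 : m < 1 := by exact_mod_cast h4
      omega
    rw [hm, hm0]
    simp
  -- the samples are constant
  have hconst : ∀ k : ℤ, ε k = ε 0 := by
    refine const_of_iter_diff_zero N ε M (fun k => ?_) hDN0
    have := hDbd 0 k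
    simpa using this
  -- and tend to zero, hence vanish
  have hεF : ∀ k : ℤ, ((ε k : ℝ) : ℂ) = 𝓕 H (-((k:ℝ) * T)) := by
    intro k
    rw [← hΦ0 k, hΦinv k, Real.fourierInv_eq_fourier_neg]
  have hε00 : ε 0 = 0 := by
    have htend0 : Tendsto (fun n : ℕ => -((n:ℝ) * T)) atTop (cocompact ℝ) := by
      have h1 : Tendsto (fun n : ℕ => (n:ℝ) * T) atTop atTop :=
        (tendsto_natCast_atTop_atTop).atTop_mul_const hT
      have h2 : Tendsto (fun n : ℕ => -((n:ℝ) * T)) atTop atBot :=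
        tendsto_neg_atTop_atBot.comp h1
      refine h2.mono_right ?_
      rw [cocompact_eq_atBot_atTop]
      exact le_sup_left
    have htend : Tendsto (fun n : ℕ => 𝓕 H (-((n:ℝ) * T))) atTop (𝓝 0) :=
      (Real.zero_at_infty_fourier H).comp htend0
    have heq : (fun n : ℕ => 𝓕 H (-((n:ℝ) * T))) = fun _ : ℕ => ((ε 0 : ℝ) : ℂ) := by
      funext n
      have := hεF (n : ℤ)
      push_cast at this
      rw [← this, hconst (n : ℤ)]
    rw [heq] at htend
    have := tendsto_nhds_unique htend tendsto_const_nhds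
    exact_mod_cast this.symm
  have hker : ∀ k : ℤ, 𝓕 H ((k:ℝ) * T) = 0 := by
    intro k
    have h1 := hεF (-k)
    rw [hconst (-k), hε00] at h1
    push_cast at h1
    rw [neg_mul, neg_neg] at h1
    exact h1.symm
  -- all Fourier coefficients of H on the circle of period 1/T vanish, so H = 0
  set P : ℝ := 1 / T with hPdef
  have hP : 0 < P := by positivity
  haveI : Fact (0 < P) := ⟨hP⟩
  have hΩTlt : Ω * T < 1 := lt_of_le_of_lt hΩT (by
    rw [div_lt_one (by positivity)]; linarith)
  have h2aT : a * (T * 2) < 1 := by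
    rw [ha, div_mul_eq_mul_div, div_lt_one (by positivity)]
    have hr : Ω * (T * 2) = 2 * (Ω * T) := by ring
    have hπ3 : (3:ℝ) < Real.pi := Real.pi_gt_three
    linarith
  have haP : a < P / 2 := by
    rw [hPdef, div_div]
    exact (lt_div_iff₀ (by positivity)).mpr h2aT
  set F : AddCircle P → ℂ := AddCircle.liftIco P (-(P/2)) H with hF
  have hPend : H (-(P/2)) = H (-(P/2) + P) := by
    have e1 : H (-(P/2)) = 0 := hH0 _ (by rw [abs_of_neg (by linarith)]; linarith)
    have e2 : H (-(P/2) + P) = 0 := hH0 _ (by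
      rw [show -(P/2) + P = P/2 by ring, abs_of_pos (by linarith)]; linarith)
    rw [e1, e2]
  have hFcont : Continuous F :=
    AddCircle.liftIco_continuous hPend hHcont.continuousOn
  set Fc : C(AddCircle P, ℂ) := ⟨F, hFcont⟩ with hFc
  have hcoeff : ∀ n : ℤ, fourierCoeff (⇑Fc) n = 0 := by
    intro n
    have h1 : fourierCoeff (⇑Fc) n
        = fourierCoeffOn (lt_add_of_pos_right (-(P/2)) hP) H n := by
      rw [show ⇑Fc = AddCircle.liftIco P (-(P/2)) H from rfl]
      exact fourierCoeff_liftIco_eq H n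
    rw [h1, fourierCoeffOn_eq_integral]
    have hle : -(P/2) ≤ -(P/2) + P := by linarith
    have hvanish : ∀ x : ℝ, x ∉ Set.Ioc (-(P/2)) (-(P/2) + P) →
        (fourier (-n) (x : AddCircle (-(P/2) + P - -(P/2)))) • H x = 0 := by
      intro x hx
      have hax : a < |x| := by
        simp only [Set.mem_Ioc, not_and_or, not_lt, not_le] at hx
        rcases hx with h1 | h1
        · rw [abs_of_neg (by linarith)]; linarith
        · rw [show -(P/2) + P = P/2 by ring] at h1
          rw [abs_of_pos (by linarith)]; linarith
      rw [hH0 x hax, smul_zero]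
    have h2 : (∫ x in (-(P/2))..(-(P/2) + P),
        (fourier (-n) (x : AddCircle (-(P/2) + P - -(P/2)))) • H x) = 𝓕 H ((n:ℝ) * T) := by
      rw [intervalIntegral.integral_of_le hle,
        setIntegral_eq_integral_of_forall_compl_eq_zero hvanish,
        Real.fourier_real_eq_integral_exp_smul]
      refine integral_congr_ae (Filter.Eventually.of_forall fun x => ?_)
      simp only [fourier_coe_apply]
      congr 1
      have hPT : -(P/2) + P - -(P/2) = 1 / T := by rw [hPdef]; ring
      rw [hPT]
      push_cast
      rw [div_div_eq_mul_div, div_one]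
      congr 1
      ring
    rw [h2, hker n, smul_zero]
  have hsumm : Summable (fourierCoeff (⇑Fc)) := by
    have : fourierCoeff (⇑Fc) = fun _ : ℤ => (0:ℂ) := funext hcoeff
    rw [this]
    exact summable_zero
  have hF0 : ∀ x : AddCircle P, Fc x = 0 := by
    intro x
    have hsumF := has_pointwise_sum_fourier_series_of_summable hsumm x
    simp only [hcoeff, zero_smul] at hsumF
    exact hsumF.unique hasSum_zero
  have hHzero : ∀ ξ : ℝ, H ξ = 0 := by
    intro ξ
    rcases le_or_gt |ξ| a with hle | hlt
    · obtain ⟨h1, h2⟩ := abs_le.mp hle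
      have hmem : ξ ∈ Set.Ico (-(P/2)) (-(P/2) + P) := by
        constructor
        · linarith
        · rw [show -(P/2) + P = P/2 by ring]; linarith
      have := AddCircle.liftIco_coe_apply (f := H) hmem
      rw [← this]
      exact hF0 ξ
    · exact hH0 ξ hlt
  have hzero : ∀ t : ℝ, h t = 0 := by
    intro t
    rw [← hinv t, Real.fourierInv_eq']
    simp only [hHzero, smul_zero]
    exact MeasureTheory.integral_zero ℝ ℂ
  refine ⟨0, fun t => ?_⟩
  have h1 := hzero t
  rw [hh] at h1
  have h2 : (f t : ℂ) = (g t : ℂ) := by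
    have := sub_eq_zero.mp h1
    exact this
  have h3 : f t = g t := by exact_mod_cast h2
  rw [h3]
  push_cast
  ring
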